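/- Let $X \in \Re^{n\times m}$ have full column rank $m \le n$. Then the differential of the Moore–Penrose inverse satisfies $dX^+ = -X^+ (dX) X^+ + (X'X)^{-1} (dX)' (I_n - XX^+)$; i.e., for a differentiable curve $X(t)$ of full column rank matrices, $\frac{d}{dt} X(t)^+ = -X^+ \dot{X} X^+ + (X'X)^{-1}\dot{X}'(I_n - XX^+)$. -/

import Mathlib

open Matrix

attribute [local instance] Matrix.linftyOpNormedAddCommGroup Matrix.linftyOpNormedSpace
  Matrix.linftyOpNormedRing Matrix.linftyOpNormedAlgebra

section aux

variable {a b c : ℕ} {t : ℝ}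

/-- entrywise derivatives give a derivative of the matrix-valued function -/
lemma aux_hasDerivAt_matrix {f : ℝ → Matrix (Fin a) (Fin b) ℝ} {f' : Matrix (Fin a) (Fin b) ℝ}
    (h : ∀ i j, HasDerivAt (fun s => f s i j) (f' i j) t) :
    HasDerivAt f f' t := by
  have hf : ∀ s, f s = ∑ i, ∑ j, f s i j • Matrix.single i j (1 : ℝ) := by
    intro s
    conv_lhs => rw [matrix_eq_sum_single (f s)]
    simp [Matrix.smul_single]
  have hf' : f' = ∑ i, ∑ j, f' i j • Matrix.single i j (1 : ℝ) := by
    conv_lhs => rw [matrix_eq_sum_single f']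
    simp [Matrix.smul_single]
  rw [show f = fun s => ∑ i, ∑ j, f s i j • Matrix.single i j (1 : ℝ) from funext hf, hf']
  exact HasDerivAt.fun_sum fun i _ => HasDerivAt.fun_sum fun j _ => (h i j).smul_const _

/-- matrix derivative gives entrywise derivatives -/
lemma aux_hasDerivAt_entry {f : ℝ → Matrix (Fin a) (Fin b) ℝ} {f' : Matrix (Fin a) (Fin b) ℝ}
    (h : HasDerivAt f f' t) (i : Fin a) (j : Fin b) :
    HasDerivAt (fun s => f s i j) (f' i j) t := by
  let L : Matrix (Fin a) (Fin b) ℝ →ₗ[ℝ] ℝ :=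
    { toFun := fun A => A i j
      map_add' := fun _ _ => rfl
      map_smul' := fun _ _ => rfl }
  exact (L.toContinuousLinearMap.hasFDerivAt.comp_hasDerivAt t h :)

lemma aux_mul {f : ℝ → Matrix (Fin a) (Fin b) ℝ} {f' : Matrix (Fin a) (Fin b) ℝ}
    {g : ℝ → Matrix (Fin b) (Fin c) ℝ} {g' : Matrix (Fin b) (Fin c) ℝ}
    (hf : ∀ i j, HasDerivAt (fun s => f s i j) (f' i j) t)
    (hg : ∀ i j, HasDerivAt (fun s => g s i j) (g' i j) t) :
    ∀ i j, HasDerivAt (fun s => (f s * g s) i j) ((f' * g t + f t * g') i j) t := by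
  intro i j
  simp only [Matrix.mul_apply, Matrix.add_apply]
  rw [← Finset.sum_add_distrib]
  exact HasDerivAt.fun_sum fun k _ => by simpa using (hf i k).fun_mul (hg k j)

end aux

/-- Differential of the Moore–Penrose inverse of a full column rank matrix:
for a differentiable curve `X(t)` of full column rank `n × m` matrices (where
`X⁺ = (X'X)⁻¹X'`), one has
`d/dt X(t)⁺ = -X⁺ Ẋ X⁺ + (X'X)⁻¹ Ẋ' (I_n - XX⁺)`. -/
theorem stmt14 (n m : ℕ) (hmn : m ≤ n) (X : ℝ → Matrix (Fin n) (Fin m) ℝ)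
    (hrank : ∀ s, (X s).rank = m)
    (X' : Matrix (Fin n) (Fin m) ℝ) (t : ℝ)
    (hd : ∀ i j, HasDerivAt (fun s => X s i j) (X' i j) t)
    (P : ℝ → Matrix (Fin m) (Fin n) ℝ)
    (hP : ∀ s, P s = ((X s)ᵀ * X s)⁻¹ * (X s)ᵀ) :
    ∀ i j, HasDerivAt (fun s => P s i j)
      (((-(P t * X' * P t) + ((X t)ᵀ * X t)⁻¹ * X'ᵀ *
        ((1 : Matrix (Fin n) (Fin n) ℝ) - X t * P t) : Matrix (Fin m) (Fin n) ℝ)) i j) t := by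
  -- M s := (X s)ᵀ * X s is invertible for all s
  set M : ℝ → Matrix (Fin m) (Fin m) ℝ := fun s => (X s)ᵀ * X s with hM
  have hunit : ∀ s, IsUnit (M s) := by
    intro s
    rw [← Matrix.mulVec_surjective_iff_isUnit]
    have hr : (M s).rank = m := by
      rw [hM]; rw [Matrix.rank_transpose_mul_self]; exact hrank s
    have : LinearMap.range (M s).mulVecLin = ⊤ := by
      apply Submodule.eq_top_of_finrank_eq
      rw [← Matrix.rank]  -- rank def?
      rw [hr]
      simp [Module.finrank_pi]
    intro v
    have := this ▸ Submodule.mem_top (x := v) (R := ℝ)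
    obtain ⟨w, hw⟩ := LinearMap.mem_range.mp this
    exact ⟨w, hw⟩
  -- derivative of transposes
  have hdT : ∀ i j, HasDerivAt (fun s => (X s)ᵀ i j) (X'ᵀ i j) t := fun i j => hd j i
  -- derivative of M, entrywise
  have hdM : ∀ i j, HasDerivAt (fun s => M s i j) ((X'ᵀ * X t + (X t)ᵀ * X') i j) t :=
    aux_mul hdT hd
  -- derivative of M as matrix-valued fn
  have hdM' : HasDerivAt M (X'ᵀ * X t + (X t)ᵀ * X') t := aux_hasDerivAt_matrix hdM
  -- derivative of inverse of M
  set u : (Matrix (Fin m) (Fin m) ℝ)ˣ := (hunit t).unit with hu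
  have hinv : HasDerivAt (fun s => Ring.inverse (M s))
      (-((M t)⁻¹ * (X'ᵀ * X t + (X t)ᵀ * X') * (M t)⁻¹)) t := by
    have h1 := (hasFDerivAt_ringInverse (𝕜 := ℝ) u).comp_hasDerivAt t hdM'
    have hu' : (↑u⁻¹ : Matrix (Fin m) (Fin m) ℝ) = (M t)⁻¹ := by
      rw [Matrix.coe_units_inv, (hunit t).unit_spec]
    simp [hu', ContinuousLinearMap.mulLeftRight_apply, Matrix.mul_assoc] at h1
    rw [Matrix.mul_assoc ((M t)⁻¹)]
    exact h1
  have hinv2 : HasDerivAt (fun s => (M s)⁻¹)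
      (-((M t)⁻¹ * (X'ᵀ * X t + (X t)ᵀ * X') * (M t)⁻¹)) t := by
    simpa only [Matrix.nonsing_inv_eq_ringInverse] using hinv
  have hQ : ∀ i j, HasDerivAt (fun s => (M s)⁻¹ i j)
      ((-((M t)⁻¹ * (X'ᵀ * X t + (X t)ᵀ * X') * (M t)⁻¹)) i j) t :=
    fun i j => aux_hasDerivAt_entry hinv2 i j
  -- P s = (M s)⁻¹ * (X s)ᵀ
  have hPd := aux_mul hQ hdT
  have heq : -((M t)⁻¹ * (X'ᵀ * X t + (X t)ᵀ * X') * (M t)⁻¹) * (X t)ᵀ + (M t)⁻¹ * X'ᵀ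
      = -(P t * X' * P t) + ((X t)ᵀ * X t)⁻¹ * X'ᵀ *
        ((1 : Matrix (Fin n) (Fin n) ℝ) - X t * P t) := by
    rw [hP t, hM]
    simp only [Matrix.mul_add, Matrix.add_mul, Matrix.neg_mul, Matrix.mul_neg, Matrix.mul_sub,
      Matrix.sub_mul, Matrix.mul_one, Matrix.one_mul, Matrix.mul_assoc, neg_add_rev]
    abel
  intro i j
  have h2 := hPd i j
  have hfun : (fun s => ((M s)⁻¹ * (X s)ᵀ) i j) = fun s => P s i j := by
    funext s; rw [hP s]
  rw [hfun] at h2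
  rw [← heq]
  simpa using h2
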